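/- For every integer k ≥ 1 there exists a connected graph G_k with k(G_k) = l(G_k) = s(G_k) = k. Concretely, the graph consisting of a path P of length 4k with a pendant path of length k attached at its middle vertex satisfies: P is the unique diameter, P is a minimum eccentricity shortest path, and ecc(P) = k. -/

import Mathlib

open SimpleGraph

variable {V : Type*}

/-- Distance from a vertex `x` to (the support of) a walk `p`. -/
noncomputable def walkDist (G : SimpleGraph V) {u v : V} (x : V) (p : G.Walk u v) : ℕ :=
  sInf {n | ∃ w ∈ p.support, G.dist x w = n}

/-- A walk is a shortest path when its length equals the distance between its ends. -/
noncomputable def IsShortestPath (G : SimpleGraph V) {u v : V} (p : G.Walk u v) : Prop :=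
  p.length = G.dist u v

/-- Eccentricity of a walk: the largest distance from any vertex to the walk. -/
noncomputable def walkEcc [Fintype V] (G : SimpleGraph V) {u v : V} (p : G.Walk u v) : ℕ :=
  sSup {n | ∃ x : V, walkDist G x p = n}

/-- A diameter: a shortest path of maximum length among all distances. -/
noncomputable def IsDiameter [Fintype V] (G : SimpleGraph V) {u v : V} (p : G.Walk u v) : Prop :=
  IsShortestPath G p ∧ ∀ a b : V, G.dist a b ≤ p.length

/-- `k(G)`: minimum eccentricity over all shortest paths. -/
noncomputable def minK [Fintype V] (G : SimpleGraph V) : ℕ :=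
  sInf {n | ∃ (u v : V) (p : G.Walk u v), IsShortestPath G p ∧ walkEcc G p = n}

/-- `l(G)`: minimum eccentricity over all diameters. -/
noncomputable def minL [Fintype V] (G : SimpleGraph V) : ℕ :=
  sInf {n | ∃ (u v : V) (p : G.Walk u v), IsDiameter G p ∧ walkEcc G p = n}

/-- `s(G)`: maximum eccentricity over all diameters. -/
noncomputable def maxS [Fintype V] (G : SimpleGraph V) : ℕ :=
  sSup {n | ∃ (u v : V) (p : G.Walk u v), IsDiameter G p ∧ walkEcc G p = n}

namespace C11

instance (j : ℕ) : NeZero (4*j+3) := ⟨by omega⟩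

def G (j : ℕ) : SimpleGraph (ZMod (4*j+3)) where
  Adj x y := x ≠ y ∧ (y = x + 1 ∨ x = y + 1)
  symm := ⟨fun x y ⟨h1, h2⟩ => ⟨h1.symm, h2.symm⟩⟩
  loopless := ⟨fun x ⟨h1, _⟩ => h1 rfl⟩

lemma val_one' (j : ℕ) : (1 : ZMod (4*j+3)).val = 1 := by
  rw [← Nat.cast_one, ZMod.val_cast_of_lt (by omega)]

lemma adj_succ (j : ℕ) (x : ZMod (4*j+3)) : (G j).Adj x (x+1) := by
  refine ⟨fun h => ?_, Or.inl rfl⟩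
  have h1 : (1 : ZMod (4*j+3)) = 0 := (left_eq_add.mp h)
  have := val_one' j
  rw [h1] at this
  simp at this

lemma val_add_or (j : ℕ) (a b : ZMod (4*j+3)) :
    (a+b).val = a.val + b.val ∨ (a+b).val + (4*j+3) = a.val + b.val := by
  have h1 : a.val < 4*j+3 := ZMod.val_lt a
  have h2 : b.val < 4*j+3 := ZMod.val_lt b
  rcases Nat.lt_or_ge (a.val + b.val) (4*j+3) with h | h
  · left; rw [ZMod.val_add, Nat.mod_eq_of_lt h]
  · right; rw [ZMod.val_add]
    have : (a.val + b.val) % (4*j+3) = a.val + b.val - (4*j+3) := by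
      rw [Nat.mod_eq_sub_mod h, Nat.mod_eq_of_lt (by omega)]
    omega

lemma val_neg_or (j : ℕ) (a : ZMod (4*j+3)) :
    (a.val = 0 ∧ (-a).val = 0) ∨ a.val + (-a).val = 4*j+3 := by
  rcases eq_or_ne a 0 with h | h
  · left; simp [h]
  · right
    rw [ZMod.neg_val, if_neg h]
    have h1 : a.val < 4*j+3 := ZMod.val_lt a
    have h2 : a.val ≠ 0 := fun hv => h ((ZMod.val_eq_zero a).mp hv)
    omega


/-- cycle distance -/
def cd (j : ℕ) (x y : ZMod (4*j+3)) : ℕ := min (x-y).val (y-x).val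

def wk (j : ℕ) : ∀ (m : ℕ) (x : ZMod (4*j+3)), (G j).Walk x (x + (m : ZMod (4*j+3)))
  | 0, x => Walk.nil.copy rfl (by simp)
  | (m+1), x => (Walk.cons (adj_succ j x) (wk j m (x+1))).copy rfl (by push_cast; ring)

lemma wk_length (j m : ℕ) (x : ZMod (4*j+3)) : (wk j m x).length = m := by
  induction m generalizing x with
  | zero => simp [wk]
  | succ m ih => simp [wk, ih]

lemma val_cast_self (j : ℕ) (y x : ZMod (4*j+3)) :
    x + (((y - x).val : ℕ) : ZMod (4*j+3)) = y := by
  rw [ZMod.natCast_val, ZMod.cast_id]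
  ring

lemma dist_le_cd (j : ℕ) (x y : ZMod (4*j+3)) : (G j).dist x y ≤ cd j x y := by
  have key : ∀ a b : ZMod (4*j+3), (G j).dist a b ≤ (b - a).val := by
    intro a b
    have h := SimpleGraph.dist_le ((wk j ((b - a).val) a).copy rfl (val_cast_self j b a))
    rwa [Walk.length_copy, wk_length] at h
  have h1 := key x y
  have h2 := key y x
  rw [SimpleGraph.dist_comm (u := y)] at h2
  simp only [cd, le_min_iff]
  exact ⟨h2, h1⟩

lemma cd_lipschitz (j : ℕ) {x w : ZMod (4*j+3)} (h : (G j).Adj x w) (y : ZMod (4*j+3)) :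
    cd j x y ≤ cd j w y + 1 := by
  have hA := val_neg_or j (x - y)
  have hB := val_neg_or j (w - y)
  have hA1 : (-(x-y)) = y - x := by ring
  have hB1 : (-(w-y)) = y - w := by ring
  rw [hA1] at hA; rw [hB1] at hB
  have l1 : (x-y).val < 4*j+3 := ZMod.val_lt _
  have l2 : (y-x).val < 4*j+3 := ZMod.val_lt _
  have l3 : (w-y).val < 4*j+3 := ZMod.val_lt _
  have l4 : (y-w).val < 4*j+3 := ZMod.val_lt _
  rcases h.2 with h' | h'
  · -- w = x + 1, so w - y = (x - y) + 1
    have e : w - y = (x - y) + 1 := by rw [h']; ring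
    have := val_add_or j (x-y) 1
    rw [← e, val_one'] at this
    simp only [cd]
    omega
  · -- x = w + 1, so x - y = (w - y) + 1
    have e : x - y = (w - y) + 1 := by rw [h']; ring
    have := val_add_or j (w-y) 1
    rw [← e, val_one'] at this
    simp only [cd]
    omega

lemma cd_le_length (j : ℕ) {x y : ZMod (4*j+3)} (p : (G j).Walk x y) : cd j x y ≤ p.length := by
  induction p with
  | nil => simp [cd]
  | @cons a b c h p ih =>
    have := cd_lipschitz j h c
    simp only [Walk.length_cons]
    omega

lemma dist_eq (j : ℕ) (x y : ZMod (4*j+3)) : (G j).dist x y = cd j x y := by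
  refine le_antisymm (dist_le_cd j x y) ?_
  have hr : (G j).Reachable x y := ⟨(wk j ((y - x).val) x).copy rfl (val_cast_self j y x)⟩
  obtain ⟨p, hp⟩ := hr.exists_walk_length_eq_dist
  rw [← hp]
  exact cd_le_length j p

lemma connected (j : ℕ) : (G j).Connected := by
  rw [SimpleGraph.connected_iff]
  exact ⟨fun x y => ⟨(wk j ((y - x).val) x).copy rfl (val_cast_self j y x)⟩, inferInstance⟩


lemma diam_bound (j : ℕ) (a b : ZMod (4*j+3)) : (G j).dist a b ≤ 2*j+1 := by
  rw [dist_eq]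
  have h := val_neg_or j (a-b)
  have e : -(a-b) = b - a := by ring
  rw [e] at h
  have l1 : (a-b).val < 4*j+3 := ZMod.val_lt _
  simp only [cd]
  omega

lemma support_between (j : ℕ) {u v w : ZMod (4*j+3)} (p : (G j).Walk u v)
    (hp : p.length = (G j).dist u v) (hw : w ∈ p.support) :
    (G j).dist u w + (G j).dist w v = (G j).dist u v := by
  have h1 := SimpleGraph.dist_le (p.takeUntil w hw)
  have h2 := SimpleGraph.dist_le (p.dropUntil w hw)
  have h3 : (p.takeUntil w hw).length + (p.dropUntil w hw).length = p.length := by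
    rw [← Walk.length_append, p.take_spec hw]
  have h4 := (connected j).dist_triangle (u := u) (v := w) (w := v)
  omega

lemma near_endpoint (j : ℕ) {u v : ZMod (4*j+3)} (huv : (G j).dist u v = 2*j+1)
    (x : ZMod (4*j+3)) : (G j).dist x u ≤ j+1 ∨ (G j).dist x v ≤ j+1 := by
  rw [dist_eq] at huv ⊢
  rw [dist_eq]
  have e : x - v = (x - u) + (u - v) := by ring
  have h1 := val_add_or j (x-u) (u-v)
  rw [← e] at h1
  have n1 := val_neg_or j (x-u)
  have n2 := val_neg_or j (x-v)
  have n3 := val_neg_or j (u-v)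
  have e1 : -(x-u) = u - x := by ring
  have e2 : -(x-v) = v - x := by ring
  have e3 : -(u-v) = v - u := by ring
  rw [e1] at n1; rw [e2] at n2; rw [e3] at n3
  have l1 : (x-u).val < 4*j+3 := ZMod.val_lt _
  have l2 : (u-v).val < 4*j+3 := ZMod.val_lt _
  have l3 : (x-v).val < 4*j+3 := ZMod.val_lt _
  simp only [cd] at huv ⊢
  omega

lemma far_point_aux (j : ℕ) {u v : ZMod (4*j+3)} (p : (G j).Walk u v)
    (hp : p.length = (G j).dist u v) (hor : (v - u).val = (G j).dist u v) :
    ∀ w ∈ p.support, j+1 ≤ (G j).dist (u - (((j+1 : ℕ)) : ZMod (4*j+3))) w := by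
  intro w hw
  set x := u - (((j+1 : ℕ)) : ZMod (4*j+3)) with hx
  have hbet := support_between j p hp hw
  have hL : (G j).dist u v ≤ 2*j+1 := diam_bound j u v
  rw [dist_eq, dist_eq, dist_eq] at hbet
  rw [dist_eq]
  have e1 : v - w = (v - u) + (u - w) := by ring
  have h1 := val_add_or j (v-u) (u-w)
  rw [← e1] at h1
  have e2 : w - x = (w - u) + (((j+1 : ℕ)) : ZMod (4*j+3)) := by rw [hx]; ring
  have h2 := val_add_or j (w-u) (((j+1 : ℕ)) : ZMod (4*j+3))
  rw [← e2, ZMod.val_cast_of_lt (show j+1 < 4*j+3 by omega)] at h2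
  have n1 := val_neg_or j (u-w)
  have n2 := val_neg_or j (v-w)
  have n3 := val_neg_or j (x-w)
  have n4 := val_neg_or j (u-v)
  have e3 : -(u-w) = w - u := by ring
  have e4 : -(v-w) = w - v := by ring
  have e5 : -(x-w) = w - x := by ring
  have e6 : -(u-v) = v - u := by ring
  rw [e3] at n1; rw [e4] at n2; rw [e5] at n3; rw [e6] at n4
  have l1 : (u-w).val < 4*j+3 := ZMod.val_lt _
  have l2 : (v-w).val < 4*j+3 := ZMod.val_lt _
  have l3 : (x-w).val < 4*j+3 := ZMod.val_lt _
  have l4 : (u-v).val < 4*j+3 := ZMod.val_lt _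
  rw [dist_eq] at hor hL
  simp only [cd] at hbet hor hL ⊢
  omega

lemma far_point (j : ℕ) {u v : ZMod (4*j+3)} (p : (G j).Walk u v)
    (hp : p.length = (G j).dist u v) :
    ∃ x : ZMod (4*j+3), ∀ w ∈ p.support, j+1 ≤ (G j).dist x w := by
  have hcase : (v - u).val = (G j).dist u v ∨ (u - v).val = (G j).dist u v := by
    rw [dist_eq]
    have n := val_neg_or j (u-v)
    have e : -(u-v) = v - u := by ring
    rw [e] at n
    simp only [cd]
    omega
  rcases hcase with h | h
  · exact ⟨u - (((j+1 : ℕ)) : ZMod (4*j+3)), far_point_aux j p hp h⟩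
  · refine ⟨v - (((j+1 : ℕ)) : ZMod (4*j+3)), fun w hw => ?_⟩
    have hp' : p.reverse.length = (G j).dist v u := by
      rw [Walk.length_reverse, SimpleGraph.dist_comm]; exact hp
    have h' : (u - v).val = (G j).dist v u := by rw [SimpleGraph.dist_comm]; exact h
    exact far_point_aux j p.reverse hp' h' w (by rw [Walk.support_reverse, List.mem_reverse]; exact hw)



-- eccentricity layer

lemma walkDist_le (j : ℕ) {u v : ZMod (4*j+3)} (p : (G j).Walk u v) (x w : ZMod (4*j+3))
    (hw : w ∈ p.support) : walkDist (G j) x p ≤ (G j).dist x w :=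
  Nat.sInf_le ⟨w, hw, rfl⟩

lemma walkDist_le_diam (j : ℕ) {u v : ZMod (4*j+3)} (p : (G j).Walk u v) (x : ZMod (4*j+3)) :
    walkDist (G j) x p ≤ 2*j+1 :=
  le_trans (walkDist_le j p x u p.start_mem_support) (diam_bound j x u)

lemma le_walkDist (j : ℕ) {u v : ZMod (4*j+3)} (p : (G j).Walk u v) (x : ZMod (4*j+3)) (m : ℕ)
    (h : ∀ w ∈ p.support, m ≤ (G j).dist x w) : m ≤ walkDist (G j) x p := by
  refine le_csInf ⟨(G j).dist x u, u, p.start_mem_support, rfl⟩ ?_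
  rintro b ⟨w, hw, rfl⟩
  exact h w hw

lemma walkEcc_bddAbove (j : ℕ) {u v : ZMod (4*j+3)} (p : (G j).Walk u v) :
    BddAbove {n | ∃ x : ZMod (4*j+3), walkDist (G j) x p = n} := by
  refine ⟨2*j+1, ?_⟩
  rintro m ⟨x, rfl⟩
  exact walkDist_le_diam j p x

lemma ecc_ge (j : ℕ) {u v : ZMod (4*j+3)} (p : (G j).Walk u v)
    (hp : IsShortestPath (G j) p) : j+1 ≤ walkEcc (G j) p := by
  obtain ⟨x, hx⟩ := far_point j p hp
  exact le_trans (le_walkDist j p x (j+1) hx) (le_csSup (walkEcc_bddAbove j p) ⟨x, rfl⟩)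

lemma ecc_eq (j : ℕ) {u v : ZMod (4*j+3)} (p : (G j).Walk u v)
    (hp : IsShortestPath (G j) p) (hd : (G j).dist u v = 2*j+1) :
    walkEcc (G j) p = j+1 := by
  have hub : ∀ x : ZMod (4*j+3), walkDist (G j) x p ≤ j+1 := by
    intro x
    rcases near_endpoint j hd x with h | h
    · exact le_trans (walkDist_le j p x u p.start_mem_support) h
    · exact le_trans (walkDist_le j p x v p.end_mem_support) h
  refine le_antisymm ?_ (ecc_ge j p hp)
  refine csSup_le ⟨walkDist (G j) u p, u, rfl⟩ ?_
  rintro m ⟨x, rfl⟩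
  exact hub x

-- the concrete diameter path

noncomputable def P (j : ℕ) : (G j).Walk 0 (((2*j+1 : ℕ)) : ZMod (4*j+3)) :=
  (wk j (2*j+1) 0).copy rfl (zero_add _)

lemma dist_0c (j : ℕ) : (G j).dist 0 (((2*j+1 : ℕ)) : ZMod (4*j+3)) = 2*j+1 := by
  rw [dist_eq]
  set c : ZMod (4*j+3) := ((2*j+1 : ℕ) : ZMod (4*j+3)) with hc
  have h1 : (c - 0).val = 2*j+1 := by
    rw [sub_zero, hc, ZMod.val_cast_of_lt (by omega)]
  have n1 := val_neg_or j (c - 0)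
  have e : -(c - 0) = 0 - c := by ring
  rw [e] at n1
  simp only [cd]
  omega

lemma P_length (j : ℕ) : (P j).length = 2*j+1 := by
  simp [P, wk_length]

lemma P_shortest (j : ℕ) : IsShortestPath (G j) (P j) := by
  unfold IsShortestPath
  rw [P_length, dist_0c]

lemma P_diameter (j : ℕ) : IsDiameter (G j) (P j) := by
  refine ⟨P_shortest j, fun a b => ?_⟩
  rw [P_length]
  exact diam_bound j a b

lemma P_ecc (j : ℕ) : walkEcc (G j) (P j) = j+1 :=
  ecc_eq j (P j) (P_shortest j) (dist_0c j)

lemma diam_dist (j : ℕ) {u v : ZMod (4*j+3)} (p : (G j).Walk u v)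
    (hd : IsDiameter (G j) p) : (G j).dist u v = 2*j+1 := by
  have h1 := hd.2 0 (((2*j+1 : ℕ)) : ZMod (4*j+3))
  rw [dist_0c] at h1
  have h2 := hd.1
  unfold IsShortestPath at h2
  have h3 := diam_bound j u v
  omega

end C11

theorem stmt11 :
    ∀ k : ℕ, 1 ≤ k →
      ∃ (V : Type) (_ : Fintype V) (G : SimpleGraph V), G.Connected ∧
        minK G = k ∧ minL G = k ∧ maxS G = k := by
  intro k hk
  obtain ⟨j, rfl⟩ : ∃ j, k = j + 1 := ⟨k - 1, by omega⟩
  refine ⟨ZMod (4*j+3), inferInstance, C11.G j, C11.connected j, ?_, ?_, ?_⟩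
  · -- minK
    have mem : j+1 ∈ {n | ∃ (u v : ZMod (4*j+3)) (p : (C11.G j).Walk u v),
        IsShortestPath (C11.G j) p ∧ walkEcc (C11.G j) p = n} :=
      ⟨0, _, C11.P j, C11.P_shortest j, C11.P_ecc j⟩
    refine le_antisymm (Nat.sInf_le mem) (le_csInf ⟨_, mem⟩ ?_)
    rintro m ⟨u, v, p, hp, rfl⟩
    exact C11.ecc_ge j p hp
  · -- minL
    have mem : j+1 ∈ {n | ∃ (u v : ZMod (4*j+3)) (p : (C11.G j).Walk u v),
        IsDiameter (C11.G j) p ∧ walkEcc (C11.G j) p = n} :=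
      ⟨0, _, C11.P j, C11.P_diameter j, C11.P_ecc j⟩
    refine le_antisymm (Nat.sInf_le mem) (le_csInf ⟨_, mem⟩ ?_)
    rintro m ⟨u, v, p, hd, rfl⟩
    exact (C11.ecc_eq j p hd.1 (C11.diam_dist j p hd)).ge
  · -- maxS
    have mem : j+1 ∈ {n | ∃ (u v : ZMod (4*j+3)) (p : (C11.G j).Walk u v),
        IsDiameter (C11.G j) p ∧ walkEcc (C11.G j) p = n} :=
      ⟨0, _, C11.P j, C11.P_diameter j, C11.P_ecc j⟩
    have hall : ∀ m ∈ {n | ∃ (u v : ZMod (4*j+3)) (p : (C11.G j).Walk u v),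
        IsDiameter (C11.G j) p ∧ walkEcc (C11.G j) p = n}, m ≤ j+1 := by
      rintro m ⟨u, v, p, hd, rfl⟩
      exact (C11.ecc_eq j p hd.1 (C11.diam_dist j p hd)).le
    exact le_antisymm (csSup_le ⟨_, mem⟩ hall) (le_csSup ⟨j+1, hall⟩ mem)
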